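/- If three lines in P^2 over F_2 together contain all 7 rational points, then the three lines are distinct and pass through a common point. -/
import Mathlib


/-- A point of `P^2(F_2)` is a 1-dimensional subspace of `F_2^3`. -/
abbrev FanoPoint (p : Submodule (ZMod 2) (Fin 3 → ZMod 2)) : Prop :=
  Module.finrank (ZMod 2) p = 1

/-- A line of `P^2(F_2)` is a 2-dimensional subspace of `F_2^3`. -/
abbrev FanoLine (L : Submodule (ZMod 2) (Fin 3 → ZMod 2)) : Prop :=
  Module.finrank (ZMod 2) L = 2

section Aux

open Module

set_option synthInstance.maxSize 3000 in
set_option maxHeartbeats 1000000 in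
lemma fano_key (a₁ a₂ a₃ : Fin 3 → ZMod 2) (h₁ : a₁ ≠ 0) (h₂ : a₂ ≠ 0) (h₃ : a₃ ≠ 0)
    (hc : ∀ v : Fin 3 → ZMod 2, v ≠ 0 →
      dotProduct a₁ v = 0 ∨ dotProduct a₂ v = 0 ∨ dotProduct a₃ v = 0) :
    (a₁ ≠ a₂ ∧ a₁ ≠ a₃ ∧ a₂ ≠ a₃) ∧
      ∃ v : Fin 3 → ZMod 2, v ≠ 0 ∧ dotProduct a₁ v = 0 ∧
        dotProduct a₂ v = 0 ∧ dotProduct a₃ v = 0 := by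
  revert h₁ h₂ h₃ hc; revert a₁ a₂ a₃; decide

/-- Every Fano line is the kernel of a nonzero functional given by dot product. -/
lemma fano_line_eq_ker (L : Submodule (ZMod 2) (Fin 3 → ZMod 2)) (hL : FanoLine L) :
    ∃ a : Fin 3 → ZMod 2, a ≠ 0 ∧ ∀ v, v ∈ L ↔ dotProduct a v = 0 := by
  have h3 : finrank (ZMod 2) (Fin 3 → ZMod 2) = 3 := Module.finrank_fin_fun _
  have hquot : finrank (ZMod 2) ((Fin 3 → ZMod 2) ⧸ L) = 1 := by
    have h := Submodule.finrank_quotient_add_finrank L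
    rw [hL, h3] at h
    omega
  have hann : finrank (ZMod 2) L.dualAnnihilator = 1 :=
    ((Subspace.quotEquivAnnihilator L).finrank_eq).symm.trans hquot
  have hne : L.dualAnnihilator ≠ ⊥ := by
    intro h
    rw [h] at hann
    simp at hann
  obtain ⟨φ, hφmem, hφne⟩ := Submodule.exists_mem_ne_zero_of_ne_bot hne
  rw [Submodule.mem_dualAnnihilator] at hφmem
  have hker : L = LinearMap.ker φ := by
    have hle : L ≤ LinearMap.ker φ := fun v hv => by
      simpa using hφmem v hv
    have hrtop : LinearMap.range φ = ⊤ := by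
      obtain ⟨x, hx⟩ : ∃ x, φ x ≠ 0 := by
        by_contra h
        push_neg at h
        exact hφne (LinearMap.ext fun x => by simp [h x])
      rw [eq_top_iff]
      intro c _
      refine ⟨(c * (φ x)⁻¹) • x, ?_⟩
      rw [map_smul, smul_eq_mul, mul_assoc, inv_mul_cancel₀ hx, mul_one]
    have hrange : finrank (ZMod 2) (LinearMap.range φ) = 1 := by
      rw [hrtop, finrank_top]
      exact Module.finrank_self _
    have hrk := LinearMap.finrank_range_add_finrank_ker φ
    rw [hrange, h3] at hrk
    refine (Submodule.eq_of_le_of_finrank_eq hle ?_).symm.symm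
    rw [hL]
    omega
  have hsingle : ∀ (ψ : Module.Dual (ZMod 2) (Fin 3 → ZMod 2)) (v : Fin 3 → ZMod 2),
      ψ v = dotProduct (fun j => ψ (Pi.single j 1)) v := by
    intro ψ v
    rw [LinearMap.pi_apply_eq_sum_univ ψ v, dotProduct]
    refine Finset.sum_congr rfl fun j _ => ?_
    have hj : (fun k => if j = k then (1 : ZMod 2) else 0) = Pi.single j 1 := by
      ext k
      simp [Pi.single_apply, eq_comm]
    rw [hj, smul_eq_mul, mul_comm]
  refine ⟨fun j => φ (Pi.single j 1), ?_, ?_⟩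
  · intro h
    apply hφne
    apply LinearMap.ext
    intro v
    rw [LinearMap.zero_apply, hsingle φ v, h]
    simp [dotProduct]
  · intro v
    rw [hker, LinearMap.mem_ker, hsingle φ v]

end Aux

/-- If three lines in `P^2(F_2)` together contain all 7 rational points, then the
three lines are distinct and pass through a common point. -/
theorem three_lines_covering_are_concurrent
    (L₁ L₂ L₃ : Submodule (ZMod 2) (Fin 3 → ZMod 2))
    (h₁ : FanoLine L₁) (h₂ : FanoLine L₂) (h₃ : FanoLine L₃)
    (hcover : ∀ p : Submodule (ZMod 2) (Fin 3 → ZMod 2), FanoPoint p →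
      p ≤ L₁ ∨ p ≤ L₂ ∨ p ≤ L₃) :
    (L₁ ≠ L₂ ∧ L₁ ≠ L₃ ∧ L₂ ≠ L₃) ∧
    ∃ p : Submodule (ZMod 2) (Fin 3 → ZMod 2),
      FanoPoint p ∧ p ≤ L₁ ∧ p ≤ L₂ ∧ p ≤ L₃ := by
  obtain ⟨a₁, ha₁, hL₁⟩ := fano_line_eq_ker L₁ h₁
  obtain ⟨a₂, ha₂, hL₂⟩ := fano_line_eq_ker L₂ h₂
  obtain ⟨a₃, ha₃, hL₃⟩ := fano_line_eq_ker L₃ h₃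
  have hc : ∀ v : Fin 3 → ZMod 2, v ≠ 0 →
      dotProduct a₁ v = 0 ∨ dotProduct a₂ v = 0 ∨ dotProduct a₃ v = 0 := by
    intro v hv
    have hp : FanoPoint (Submodule.span (ZMod 2) {v}) := finrank_span_singleton hv
    rcases hcover _ hp with h | h | h
    · exact Or.inl ((hL₁ v).mp ((Submodule.span_singleton_le_iff_mem v L₁).mp h))
    · exact Or.inr (Or.inl ((hL₂ v).mp ((Submodule.span_singleton_le_iff_mem v L₂).mp h)))
    · exact Or.inr (Or.inr ((hL₃ v).mp ((Submodule.span_singleton_le_iff_mem v L₃).mp h)))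
  obtain ⟨⟨hd₁₂, hd₁₃, hd₂₃⟩, v, hv, hv₁, hv₂, hv₃⟩ := fano_key a₁ a₂ a₃ ha₁ ha₂ ha₃ hc
  have line_ne : ∀ (La Lb : Submodule (ZMod 2) (Fin 3 → ZMod 2)) (aa ab : Fin 3 → ZMod 2),
      (∀ w, w ∈ La ↔ dotProduct aa w = 0) →
      (∀ w, w ∈ Lb ↔ dotProduct ab w = 0) → aa ≠ ab → La ≠ Lb := by
    intro La Lb aa ab hLa hLb hab heq
    apply hab
    ext j
    have hone := hLa (Pi.single j 1)
    have htwo := hLb (Pi.single j 1)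
    rw [heq] at hone
    have hd : ∀ c : Fin 3 → ZMod 2, dotProduct c (Pi.single j 1) = c j := by
      intro c
      simp [dotProduct, Pi.single_apply]
    rw [hd] at hone htwo
    have key : ∀ x y : ZMod 2, ((x = 0) ↔ (y = 0)) → x = y := by decide
    exact key _ _ (by rw [← hone, ← htwo])
  constructor
  · exact ⟨line_ne L₁ L₂ a₁ a₂ hL₁ hL₂ hd₁₂,
      line_ne L₁ L₃ a₁ a₃ hL₁ hL₃ hd₁₃,
      line_ne L₂ L₃ a₂ a₃ hL₂ hL₃ hd₂₃⟩
  · refine ⟨Submodule.span (ZMod 2) {v}, finrank_span_singleton hv, ?_, ?_, ?_⟩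
    · exact (Submodule.span_singleton_le_iff_mem v L₁).mpr ((hL₁ v).mpr hv₁)
    · exact (Submodule.span_singleton_le_iff_mem v L₂).mpr ((hL₂ v).mpr hv₂)
    · exact (Submodule.span_singleton_le_iff_mem v L₃).mpr ((hL₃ v).mpr hv₃)
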